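/- arXiv:2106.00519 — 2 statements merged into one kernel-verified Lean document; each statement's English description precedes it below -/
import Mathlib

section
/- Let U ⊆ ℝ^n be open, let f : U → ℝ^n, and let x ∈ U. Suppose that the tangent cone T_{gph f}(x, f(x)) to the graph of f at (x, f(x)) is an n-dimensional linear subspace of ℝ^{2n}, and that f is calm at x, i.e. there exist κ ≥ 0 and δ > 0 with ‖f(x') − f(x)‖ ≤ κ‖x' − x‖ for all x' ∈ U with ‖x' − x‖ ≤ δ. Then f is Fréchet differentiable at x. -/
open Filter Topology Metric Set
open scoped InnerProductSpace RealInnerProductSpace ENNReal NNReal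

noncomputable section

namespace SCD

abbrev E (n : ℕ) := EuclideanSpace ℝ (Fin n)
abbrev E2 (n : ℕ) := WithLp 2 (E n × E n)

variable {n : ℕ}

def lp2 (n : ℕ) : E2 n ≃ₗ[ℝ] E n × E n := WithLp.linearEquiv 2 ℝ (E n × E n)
def mk2 (u v : E n) : E2 n := (lp2 n).symm (u, v)
def fst2 (z : E2 n) : E n := (lp2 n z).1
def snd2 (z : E2 n) : E n := (lp2 n z).2

instance : FiniteDimensional ℝ (E2 n) := Module.Finite.equiv (lp2 n).symm

def tcone {H : Type*} [NormedAddCommGroup H] [NormedSpace ℝ H] (A : Set H) (z : H) : Set H :=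
  {w | ∃ t : ℕ → ℝ, ∃ wk : ℕ → H, (∀ k, 0 < t k) ∧ Tendsto t atTop (𝓝 0) ∧
      Tendsto wk atTop (𝓝 w) ∧ ∀ k, z + t k • wk k ∈ A}

def gph (F : E n → Set (E n)) : Set (E2 n) := {z | snd2 z ∈ F (fst2 z)}
def projC (L : Submodule ℝ (E2 n)) : E2 n →L[ℝ] E2 n := L.subtypeL.comp L.orthogonalProjectionOnto
def dZ (L₁ L₂ : Submodule ℝ (E2 n)) : ℝ := ‖projC L₁ - projC L₂‖

def Sneg (n : ℕ) : E2 n ≃ₗ[ℝ] E2 n :=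
  (lp2 n).trans (((LinearEquiv.prodComm ℝ (E n) (E n)).trans
    ((LinearEquiv.neg ℝ).prodCongr (LinearEquiv.refl ℝ (E n)))).trans (lp2 n).symm)

def adjS (L : Submodule ℝ (E2 n)) : Submodule ℝ (E2 n) := Lᗮ.map (Sneg n).toLinearMap

/-- `O_F`: the set of points of `gph F` where `F` is graphically smooth of dimension `n`,
i.e. the tangent cone to the graph is an `n`-dimensional linear subspace. -/
def OF (F : E n → Set (E n)) : Set (E2 n) :=
  {z | z ∈ gph F ∧ ∃ L : Submodule ℝ (E2 n),
    Module.finrank ℝ L = n ∧ (L : Set (E2 n)) = tcone (gph F) z}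

/-- The primal generalized derivative `Sp F(x,y)`. -/
def Sp (F : E n → Set (E n)) (z : E2 n) : Set (Submodule ℝ (E2 n)) :=
  {L | Module.finrank ℝ L = n ∧ ∃ (zk : ℕ → E2 n) (Lk : ℕ → Submodule ℝ (E2 n)),
      (∀ k, zk k ∈ gph F ∧ Module.finrank ℝ (Lk k) = n ∧
        ((Lk k : Set (E2 n)) = tcone (gph F) (zk k))) ∧
      Tendsto zk atTop (𝓝 z) ∧ Tendsto (fun k => dZ (Lk k) L) atTop (𝓝 0)}

/-- The dual generalized derivative `Sp* F(x,y)`. -/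
def SpStar (F : E n → Set (E n)) (z : E2 n) : Set (Submodule ℝ (E2 n)) :=
  {L' | ∃ L ∈ Sp F z, L' = adjS L}

/-- `F` has the SCD property at `z ∈ gph F`. -/
def SCDAt (F : E n → Set (E n)) (z : E2 n) : Prop := (Sp F z).Nonempty

/-- `F` has the SCD property around `z ∈ gph F`. -/
def SCDAround (F : E n → Set (E n)) (z : E2 n) : Prop :=
  ∃ δ > (0 : ℝ), ∀ z' ∈ gph F, dist z' z < δ → SCDAt F z'

/-- `Z_n^{reg}`: the subspaces `L ∈ Z_n` such that `(y*, 0) ∈ L` implies `y* = 0`. -/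
def Znreg (n : ℕ) : Set (Submodule ℝ (E2 n)) :=
  {L | Module.finrank ℝ L = n ∧ ∀ y : E n, mk2 y 0 ∈ L → y = 0}

/-- `F` is SCD regular around `z ∈ gph F`. -/
def SCDRegularAround (F : E n → Set (E n)) (z : E2 n) : Prop :=
  SCDAround F z ∧ ∀ L ∈ SpStar F z, L ∈ Znreg n

/-- The set of values `‖y*‖` for `(y*, x*)` in some `L ∈ Sp* F(x,y)` with `‖x*‖ ≤ 1`;
its supremum is the modulus of SCD regularity. -/
def scdregSet (F : E n → Set (E n)) (z : E2 n) : Set ℝ :=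
  {r | ∃ L ∈ SpStar F z, ∃ w : E2 n, w ∈ L ∧ ‖snd2 w‖ ≤ 1 ∧ r = ‖fst2 w‖}

/-- The modulus of SCD regularity `scd reg F(x,y)`. -/
def scdreg (F : E n → Set (E n)) (z : E2 n) : ℝ := sSup (scdregSet F z)

/-- The graph of the outer limiting graphical derivative `D^♯F(x̄,ȳ)`. -/
def DsharpG (F : E n → Set (E n)) (z : E2 n) : Set (E2 n) :=
  {w | ∃ (zk : ℕ → E2 n) (wk : ℕ → E2 n),
    (∀ k, zk k ∈ gph F ∧ wk k ∈ tcone (gph F) (zk k)) ∧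
    Tendsto zk atTop (𝓝 z) ∧ Tendsto wk atTop (𝓝 w)}

/-- The regular (Fréchet) normal cone: the polar of the tangent cone. -/
def regN (A : Set (E2 n)) (z : E2 n) : Set (E2 n) := {w | ∀ v ∈ tcone A z, ⟪w, v⟫_ℝ ≤ 0}

/-- The limiting (Mordukhovich) normal cone. -/
def limN (A : Set (E2 n)) (z : E2 n) : Set (E2 n) :=
  {w | ∃ (zk wk : ℕ → E2 n), (∀ k, zk k ∈ A ∧ wk k ∈ regN A (zk k)) ∧
    Tendsto zk atTop (𝓝 z) ∧ Tendsto wk atTop (𝓝 w)}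

/-- The graph of the limiting coderivative: `(y*, x*)` with `(x*, -y*)` in the limiting
normal cone to the graph. -/
def coderivG (F : E n → Set (E n)) (z : E2 n) : Set (E2 n) :=
  {w | mk2 (snd2 w) (-(fst2 w)) ∈ limN (gph F) z}

/-- The graph of the strict (paratingent) derivative `D_*F(x̄,ȳ)`. -/
def paraconeG (F : E n → Set (E n)) (z : E2 n) : Set (E2 n) :=
  {w | ∃ (t : ℕ → ℝ) (z1 z2 : ℕ → E2 n), (∀ k, 0 < t k) ∧ Tendsto t atTop (𝓝 0) ∧
    (∀ k, z1 k ∈ gph F ∧ z2 k ∈ gph F) ∧ Tendsto z1 atTop (𝓝 z) ∧ Tendsto z2 atTop (𝓝 z) ∧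
    Tendsto (fun k => (t k)⁻¹ • (z2 k - z1 k)) atTop (𝓝 w)}

/-- The B-subdifferential of `f : U → ℝ^n` at `x`. -/
def Bsub (f : E n → E n) (U : Set (E n)) (x : E n) : Set (E n →L[ℝ] E n) :=
  {A | ∃ xk : ℕ → E n, (∀ k, xk k ∈ U ∧ DifferentiableAt ℝ f (xk k)) ∧
    Tendsto xk atTop (𝓝 x) ∧ Tendsto (fun k => fderiv ℝ f (xk k)) atTop (𝓝 A)}

/-- A single-valued map `f` on `U` viewed as a set-valued map. -/
def sv (f : E n → E n) (U : Set (E n)) : E n → Set (E n) := fun x => {y | x ∈ U ∧ y = f x}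

/-- The linear map `u ↦ (u, A u)`. -/
def graphMap (A : E n →L[ℝ] E n) : E n →ₗ[ℝ] E2 n :=
  (lp2 n).symm.toLinearMap.comp (LinearMap.prod LinearMap.id A.toLinearMap)

/-- The subspace `rge(I, A) = {(u, Au) : u ∈ ℝ^n}`. -/
def rgeIA (A : E n →L[ℝ] E n) : Submodule ℝ (E2 n) := LinearMap.range (graphMap A)

/-- The linear map `p ↦ (C p, p)`. -/
def graphMapRev (C : E n →L[ℝ] E n) : E n →ₗ[ℝ] E2 n :=
  (lp2 n).symm.toLinearMap.comp (LinearMap.prod C.toLinearMap LinearMap.id)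

/-- The subspace `rge(C, I) = {(C p, p) : p ∈ ℝ^n}`. -/
def rgeCI (C : E n →L[ℝ] E n) : Submodule ℝ (E2 n) := LinearMap.range (graphMapRev C)

/-- The preimage map `F^{-1}(y)`. -/
def Finv (F : E n → Set (E n)) (y : E n) : Set (E n) := {x | y ∈ F x}

/-- Metric subregularity at `z ∈ gph F` with constant `κ`. -/
def SubregWith (F : E n → Set (E n)) (z : E2 n) (κ : ℝ) : Prop :=
  ∃ δ > (0 : ℝ), ∀ x' : E n, dist x' (fst2 z) < δ →
    EMetric.infEdist x' (Finv F (snd2 z)) ≤ ENNReal.ofReal κ * EMetric.infEdist (snd2 z) (F x')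

/-- `F` is metrically subregular at `z ∈ gph F`. -/
def SubregAt (F : E n → Set (E n)) (z : E2 n) : Prop := ∃ κ, 0 ≤ κ ∧ SubregWith F z κ

/-- The modulus of metric subregularity `subreg F(x,y)`. -/
def subregMod (F : E n → Set (E n)) (z : E2 n) : ℝ := sInf {κ | 0 ≤ κ ∧ SubregWith F z κ}

/-- `F` is strongly metrically subregular at `z ∈ gph F`. -/
def StrSubregAt (F : E n → Set (E n)) (z : E2 n) : Prop :=
  SubregAt F z ∧ ∃ δ > (0 : ℝ), ∀ x' ∈ Finv F (snd2 z), dist x' (fst2 z) < δ → x' = fst2 z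

/-- `F` is strongly metrically subregular around `zb ∈ gph F` (with finite `lsubreg`). -/
def StrSubregAround (F : E n → Set (E n)) (zb : E2 n) : Prop :=
  ∃ δ > (0 : ℝ), (∀ z ∈ gph F, dist z zb < δ → StrSubregAt F z) ∧
    ∃ c : ℝ, ∀ z ∈ gph F, dist z zb < δ → subregMod F z ≤ c

/-- `lsubreg F(x̄,ȳ)`: the limsup of `subreg F(x,y)` over graph points `(x,y) → (x̄,ȳ)`. -/
def lsubreg (F : E n → Set (E n)) (zb : E2 n) : ℝ :=
  Filter.limsup (fun z => subregMod F z) (𝓝[gph F] zb)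

/-- Metric regularity around `zb ∈ gph F` with constant `κ`. -/
def RegWith (F : E n → Set (E n)) (zb : E2 n) (κ : ℝ) : Prop :=
  ∃ δ > (0 : ℝ), ∀ x y : E n, dist x (fst2 zb) < δ → dist y (snd2 zb) < δ →
    EMetric.infEdist x (Finv F y) ≤ ENNReal.ofReal κ * EMetric.infEdist y (F x)

/-- `F` is metrically regular around `zb ∈ gph F`. -/
def MetrRegAround (F : E n → Set (E n)) (zb : E2 n) : Prop := ∃ κ, 0 ≤ κ ∧ RegWith F zb κ

/-- The modulus of metric regularity `reg F(x̄,ȳ)`. -/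
def regMod (F : E n → Set (E n)) (zb : E2 n) : ℝ := sInf {κ | 0 ≤ κ ∧ RegWith F zb κ}

/-- `F` is strongly metrically regular around `zb ∈ gph F`: metrically regular and `F⁻¹`
has a single-valued localization around `(ȳ, x̄)`. -/
def StrRegAround (F : E n → Set (E n)) (zb : E2 n) : Prop :=
  MetrRegAround F zb ∧
  ∃ (X' Y' : Set (E n)) (h : E n → E n), IsOpen X' ∧ IsOpen Y' ∧
    fst2 zb ∈ X' ∧ snd2 zb ∈ Y' ∧ h (snd2 zb) = fst2 zb ∧
    gph F ∩ {w | fst2 w ∈ X' ∧ snd2 w ∈ Y'} = {w | snd2 w ∈ Y' ∧ fst2 w = h (snd2 w)}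

/-- `F` is SCD semismooth* at `zb ∈ gph F`. -/
def SCDSemismoothAt (F : E n → Set (E n)) (zb : E2 n) : Prop :=
  SCDAround F zb ∧ ∀ ε > (0 : ℝ), ∃ δ > (0 : ℝ), ∀ z ∈ gph F, dist z zb ≤ δ →
    ∀ L ∈ SpStar F z, ∀ w : E2 n, w ∈ L →
      |⟪snd2 w, fst2 z - fst2 zb⟫_ℝ - ⟪fst2 w, snd2 z - snd2 zb⟫_ℝ| ≤ ε * ‖z - zb‖ * ‖w‖

/-- `F` is graphically Lipschitzian of dimension `n` at `zb` with transformation mapping `Φ`,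
local inverse `Ψ`, neighborhood `W`, and `K`-Lipschitz map `f : U → ℝ^n`. -/
def GraphLipWith (F : E n → Set (E n)) (zb : E2 n) (Φ Ψ : E2 n → E2 n)
    (W : Set (E2 n)) (U : Set (E n)) (f : E n → E n) (K : ℝ≥0) : Prop :=
  IsOpen W ∧ zb ∈ W ∧ ContDiffOn ℝ 1 Φ W ∧ Set.InjOn Φ W ∧ IsOpen (Φ '' W) ∧
  ContDiffOn ℝ 1 Ψ (Φ '' W) ∧ Set.LeftInvOn Ψ Φ W ∧
  IsOpen U ∧ LipschitzOnWith K f U ∧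
  Φ '' (gph F ∩ W) = {w | fst2 w ∈ U ∧ snd2 w = f (fst2 w)}

/-- `F` is graphically Lipschitzian of dimension `n` at `zb` with transformation mapping `Φ`. -/
def GraphLipAt (F : E n → Set (E n)) (zb : E2 n) (Φ : E2 n → E2 n) : Prop :=
  ∃ Ψ W U f K, GraphLipWith F zb Φ Ψ W U f K

/-- `∇̄^Φ F(x̄,ȳ)`: the `(2n)×n` matrices `Z` (as linear maps `ℝ^n → ℝ^{2n}`) with
`rge Z ∈ Sp F(x̄,ȳ)` and upper block of `∇Φ(x̄,ȳ)Z` equal to the identity. -/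
def BsubPhi (F : E n → Set (E n)) (zb : E2 n) (Φ : E2 n → E2 n) : Set (E n →L[ℝ] E2 n) :=
  {Z | LinearMap.range (Z : E n →ₗ[ℝ] E2 n) ∈ Sp F zb ∧ ∀ p, fst2 (fderiv ℝ Φ zb (Z p)) = p}

/-- A (globally) monotone set-valued map. -/
def MonoMap (T : E n → Set (E n)) : Prop :=
  ∀ x₁ y₁ x₂ y₂, y₁ ∈ T x₁ → y₂ ∈ T x₂ → 0 ≤ ⟪y₁ - y₂, x₁ - x₂⟫_ℝ

/-- `F` is locally maximally monotone at `z ∈ gph F`. -/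
def LocMaxMonoAt (F : E n → Set (E n)) (z : E2 n) : Prop :=
  ∃ X Y : Set (E n), IsOpen X ∧ IsOpen Y ∧ fst2 z ∈ X ∧ snd2 z ∈ Y ∧
    (∀ w₁ ∈ gph F ∩ {w | fst2 w ∈ X ∧ snd2 w ∈ Y},
     ∀ w₂ ∈ gph F ∩ {w | fst2 w ∈ X ∧ snd2 w ∈ Y},
       0 ≤ ⟪snd2 w₁ - snd2 w₂, fst2 w₁ - fst2 w₂⟫_ℝ) ∧
    ∀ T : E n → Set (E n), MonoMap T →
      gph F ∩ {w | fst2 w ∈ X ∧ snd2 w ∈ Y} ⊆ gph T →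
      gph F ∩ {w | fst2 w ∈ X ∧ snd2 w ∈ Y} = gph T ∩ {w | fst2 w ∈ X ∧ snd2 w ∈ Y}

/-- `F` is locally maximally hypomonotone at `z ∈ gph F`:
`γI + F` is locally maximally monotone at `(x, γx + y)` for some `γ ≥ 0`. -/
def LocMaxHypoAt (F : E n → Set (E n)) (z : E2 n) : Prop :=
  ∃ γ : ℝ, 0 ≤ γ ∧ LocMaxMonoAt (fun x => (fun y => γ • x + y) '' F x)
    (mk2 (fst2 z) (γ • fst2 z + snd2 z))

/-- A firmly nonexpansive matrix: `⟨Bv, v⟩ ≥ ‖Bv‖²` for all `v`. -/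
def FirmNonexp (B : E n →L[ℝ] E n) : Prop := ∀ v, ‖B v‖ ^ 2 ≤ ⟪B v, v⟫_ℝ


/- Auxiliary lemmas -/

lemma fst2_mk2 (u v : E n) : fst2 (mk2 u v) = u := by
  simp [fst2, mk2]

lemma snd2_mk2 (u v : E n) : snd2 (mk2 u v) = v := by
  simp [snd2, mk2]

lemma fst2_add (a b : E2 n) : fst2 (a + b) = fst2 a + fst2 b := by
  simp [fst2, map_add]

lemma snd2_add (a b : E2 n) : snd2 (a + b) = snd2 a + snd2 b := by
  simp [snd2, map_add]

lemma fst2_smul (t : ℝ) (a : E2 n) : fst2 (t • a) = t • fst2 a := by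
  simp [fst2, map_smul]

lemma snd2_smul (t : ℝ) (a : E2 n) : snd2 (t • a) = t • snd2 a := by
  simp [snd2, map_smul]

lemma fst2_sub (a b : E2 n) : fst2 (a - b) = fst2 a - fst2 b := by
  simp [fst2, map_sub]

lemma snd2_sub (a b : E2 n) : snd2 (a - b) = snd2 a - snd2 b := by
  simp [snd2, map_sub]

lemma mk2_add (a b c d : E n) : mk2 a b + mk2 c d = mk2 (a + c) (b + d) := by
  simp [mk2, ← map_add, Prod.mk_add_mk]

lemma smul_mk2 (t : ℝ) (a b : E n) : t • mk2 a b = mk2 (t • a) (t • b) := by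
  simp [mk2, ← map_smul, Prod.smul_mk]

lemma eq_of_fst2_snd2 {a b : E2 n} (h1 : fst2 a = fst2 b) (h2 : snd2 a = snd2 b) : a = b := by
  have : lp2 n a = lp2 n b := Prod.ext h1 h2
  exact (lp2 n).injective this

instance : ContinuousSMul ℝ (E2 n) := NormedSpace.toIsBoundedSMul.continuousSMul

/-- `fst2` as a continuous linear map. -/
def fstL (n : ℕ) : E2 n →L[ℝ] E n :=
  LinearMap.toContinuousLinearMap ((LinearMap.fst ℝ (E n) (E n)).comp (lp2 n).toLinearMap)

/-- `snd2` as a continuous linear map. -/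
def sndL (n : ℕ) : E2 n →L[ℝ] E n :=
  LinearMap.toContinuousLinearMap ((LinearMap.snd ℝ (E n) (E n)).comp (lp2 n).toLinearMap)

lemma fstL_apply (z : E2 n) : fstL n z = fst2 z := rfl
lemma sndL_apply (z : E2 n) : sndL n z = snd2 z := rfl

lemma continuous_fst2 : Continuous (fst2 : E2 n → E n) := (fstL n).continuous
lemma continuous_snd2 : Continuous (snd2 : E2 n → E n) := (sndL n).continuous

/-- `mk2` as a continuous linear map on the product. -/
def mkL (n : ℕ) : (E n × E n) →L[ℝ] E2 n :=
  LinearMap.toContinuousLinearMap (lp2 n).symm.toLinearMap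

lemma mkL_apply (u v : E n) : mkL n (u, v) = mk2 u v := rfl

lemma mem_gph_sv_iff (f : E n → E n) (U : Set (E n)) (z : E2 n) :
    z ∈ gph (sv f U) ↔ fst2 z ∈ U ∧ snd2 z = f (fst2 z) := Iff.rfl

/- STATEMENT 3 -/
theorem stmt3 (n : ℕ) (U : Set (E n)) (hU : IsOpen U) (f : E n → E n) (x : E n) (hx : x ∈ U)
    (L : Submodule ℝ (E2 n)) (hdim : Module.finrank ℝ L = n)
    (htan : (L : Set (E2 n)) = tcone (gph (sv f U)) (mk2 x (f x)))
    (κ : ℝ) (hκ : 0 ≤ κ) (δ : ℝ) (hδ : 0 < δ)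
    (hcalm : ∀ x' ∈ U, ‖x' - x‖ ≤ δ → ‖f x' - f x‖ ≤ κ * ‖x' - x‖) :
    DifferentiableAt ℝ f x := by
  classical
  set z0 : E2 n := mk2 x (f x) with hz0
  -- Step 1: every tangent vector `w` satisfies `‖snd2 w‖ ≤ κ * ‖fst2 w‖`.
  have hbound : ∀ w ∈ tcone (gph (sv f U)) z0, ‖snd2 w‖ ≤ κ * ‖fst2 w‖ := by
    rintro w ⟨t, wk, htpos, ht0, hwk, hmem⟩
    have hu : Tendsto (fun k => fst2 (wk k)) atTop (𝓝 (fst2 w)) :=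
      (continuous_fst2.tendsto w).comp hwk
    have hv : Tendsto (fun k => snd2 (wk k)) atTop (𝓝 (snd2 w)) :=
      (continuous_snd2.tendsto w).comp hwk
    have hsm : Tendsto (fun k => t k • fst2 (wk k)) atTop (𝓝 0) := by
      simpa using ht0.smul hu
    have hsmall : ∀ᶠ k in atTop, ‖t k • fst2 (wk k)‖ ≤ δ := by
      have hn : Tendsto (fun k => ‖t k • fst2 (wk k)‖) atTop (𝓝 0) := by
        simpa using hsm.norm
      filter_upwards [hn.eventually (eventually_le_nhds hδ)] with k hk using hk
    have hev : ∀ᶠ k in atTop, ‖snd2 (wk k)‖ ≤ κ * ‖fst2 (wk k)‖ := by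
      filter_upwards [hsmall] with k hk
      have hmk := hmem k
      rw [mem_gph_sv_iff] at hmk
      have hf1 : fst2 (z0 + t k • wk k) = x + t k • fst2 (wk k) := by
        rw [fst2_add, fst2_smul, hz0, fst2_mk2]
      have hf2 : snd2 (z0 + t k • wk k) = f x + t k • snd2 (wk k) := by
        rw [snd2_add, snd2_smul, hz0, snd2_mk2]
      rw [hf1, hf2] at hmk
      obtain ⟨hU', heq⟩ := hmk
      have hnorm : ‖(x + t k • fst2 (wk k)) - x‖ ≤ δ := by
        simpa using hk
      have hc := hcalm _ hU' hnorm
      have hL1 : f (x + t k • fst2 (wk k)) - f x = t k • snd2 (wk k) := by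
        rw [← heq]; abel
      rw [hL1] at hc
      have hR : ‖(x + t k • fst2 (wk k)) - x‖ = t k * ‖fst2 (wk k)‖ := by
        simp [norm_smul, abs_of_pos (htpos k)]
      rw [hR, norm_smul, Real.norm_eq_abs, abs_of_pos (htpos k)] at hc
      have := (mul_le_mul_iff_right₀ (htpos k)).mp (by linarith [hc] : t k * ‖snd2 (wk k)‖ ≤ t k * (κ * ‖fst2 (wk k)‖))
      exact this
    exact le_of_tendsto_of_tendsto hv.norm (hu.norm.const_mul κ) hev
  -- Step 2: vectors in `L` with zero first component vanish.
  have hbL : ∀ w ∈ L, ‖snd2 w‖ ≤ κ * ‖fst2 w‖ := by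
    intro w hw
    exact hbound w (htan ▸ hw)
  have fst2_zero : fst2 (0 : E2 n) = 0 := by simp [fst2]
  have snd2_zero : snd2 (0 : E2 n) = 0 := by simp [snd2]
  -- Step 3: build the linear map `A` whose graph is `L`.
  have hrank : Module.finrank ℝ L = Module.finrank ℝ (E n) := by
    rw [hdim]; simp [finrank_euclideanSpace]
  let p : L →ₗ[ℝ] E n := (fstL n).toLinearMap.comp L.subtype
  have hpinj : Function.Injective p := by
    intro a b hab
    have hf0 : fst2 ((a : E2 n) - (b : E2 n)) = 0 := by
      rw [fst2_sub, sub_eq_zero]; exact hab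
    have hs0 : snd2 ((a : E2 n) - (b : E2 n)) = 0 := by
      have := hbL ((a : E2 n) - (b : E2 n)) (L.sub_mem a.2 b.2)
      rw [hf0] at this
      simp only [norm_zero, mul_zero] at this
      exact norm_le_zero_iff.mp this
    have : (a : E2 n) - (b : E2 n) = 0 := by
      apply eq_of_fst2_snd2 <;> simp [hf0, hs0, fst2_zero, snd2_zero]
    exact Subtype.ext (sub_eq_zero.mp this)
  let e : L ≃ₗ[ℝ] E n := LinearMap.linearEquivOfInjective p hpinj hrank
  let A : E n →ₗ[ℝ] E n := (sndL n).toLinearMap.comp (L.subtype.comp e.symm.toLinearMap)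
  let A' : E n →L[ℝ] E n := LinearMap.toContinuousLinearMap A
  have hA'app : ∀ u, A' u = snd2 ((e.symm u : L) : E2 n) := fun u => rfl
  have hgraph : ∀ w ∈ L, snd2 w = A' (fst2 w) := by
    intro w hw
    have h1 : e ⟨w, hw⟩ = fst2 w := rfl
    have h2 : e.symm (fst2 w) = ⟨w, hw⟩ := by rw [← h1, e.symm_apply_apply]
    rw [hA'app, h2]
  -- Step 4: `f` has derivative `A'` at `x`.
  have hder : HasFDerivAt f A' x := by
    rw [hasFDerivAt_iff_tendsto]
    set g : E n → ℝ := fun x' => ‖x' - x‖⁻¹ * ‖f x' - f x - A' (x' - x)‖ with hg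
    by_contra hnot
    rw [Metric.tendsto_nhds] at hnot
    push_neg at hnot
    obtain ⟨ε, hε, hfreq⟩ := hnot
    simp only [← not_lt] at hfreq
    obtain ⟨r0, hr0, hball⟩ := Metric.isOpen_iff.mp hU x hx
    have hchoice : ∀ k : ℕ, ∃ x', (¬ dist (g x') 0 < ε) ∧
        dist x' x < min (min r0 δ) (1 / (k + 1)) := by
      intro k
      have hrk : (0 : ℝ) < min (min r0 δ) (1 / (k + 1)) := by positivity
      exact (hfreq.and_eventually
        (Metric.eventually_nhds_iff.mpr ⟨_, hrk, fun _ h => h⟩)).exists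
    choose xk h1 h2 using hchoice
    have hxkU : ∀ k, xk k ∈ U := fun k =>
      hball (lt_of_lt_of_le (h2 k) (le_trans (min_le_left _ _) (min_le_left _ _)))
    have hxkδ : ∀ k, ‖xk k - x‖ ≤ δ := fun k => by
      rw [← dist_eq_norm]
      exact le_of_lt (lt_of_lt_of_le (h2 k) (le_trans (min_le_left _ _) (min_le_right _ _)))
    have hgε : ∀ k, ε ≤ g (xk k) := by
      intro k
      have habs : ε ≤ |g (xk k)| := not_lt.mp (by simpa [Real.dist_0_eq_abs] using h1 k)
      rwa [abs_of_nonneg (mul_nonneg (inv_nonneg.mpr (norm_nonneg _)) (norm_nonneg _))] at habs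
    have hne : ∀ k, xk k ≠ x := by
      intro k h
      have := hgε k
      rw [h] at this
      simp only [hg, sub_self, norm_zero, inv_zero, zero_mul] at this
      linarith
    set t : ℕ → ℝ := fun k => ‖xk k - x‖ with htdef
    have htpos : ∀ k, 0 < t k := fun k => norm_pos_iff.mpr (sub_ne_zero.mpr (hne k))
    have ht0 : Tendsto t atTop (𝓝 0) := by
      apply squeeze_zero (fun k => norm_nonneg _) (fun k => ?_)
        tendsto_one_div_add_atTop_nhds_zero_nat
      calc ‖xk k - x‖ = dist (xk k) x := (dist_eq_norm _ _).symm
        _ ≤ 1 / (k + 1) := le_of_lt (lt_of_lt_of_le (h2 k) (min_le_right _ _))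
    set u : ℕ → E n := fun k => (t k)⁻¹ • (xk k - x) with hudef
    set v : ℕ → E n := fun k => (t k)⁻¹ • (f (xk k) - f x) with hvdef
    have hun : ∀ k, ‖u k‖ = 1 := by
      intro k
      rw [hudef]
      simp only [norm_smul, Real.norm_eq_abs, abs_inv, abs_of_pos (htpos k)]
      exact inv_mul_cancel₀ (ne_of_gt (htpos k))
    have hvn : ∀ k, ‖v k‖ ≤ κ := by
      intro k
      rw [hvdef]
      simp only [norm_smul, Real.norm_eq_abs, abs_inv, abs_of_pos (htpos k)]
      calc (t k)⁻¹ * ‖f (xk k) - f x‖ ≤ (t k)⁻¹ * (κ * t k) := by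
            apply mul_le_mul_of_nonneg_left _ (le_of_lt (inv_pos.mpr (htpos k)))
            exact hcalm _ (hxkU k) (hxkδ k)
        _ = κ := by
            rw [mul_comm κ (t k), ← mul_assoc, inv_mul_cancel₀ (ne_of_gt (htpos k)), one_mul]
    -- extract a convergent subsequence of the pairs `(u k, v k)`
    have hpmem : ∀ k, (u k, v k) ∈ Metric.closedBall (0 : E n × E n) (max 1 κ) := by
      intro k
      rw [Metric.mem_closedBall, dist_zero_right, Prod.norm_def]
      exact max_le_max (le_of_eq (hun k)) (hvn k)
    obtain ⟨b, -, φ, hφ, hconv⟩ :=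
      tendsto_subseq_of_bounded Metric.isBounded_closedBall hpmem
    have hu1 : Tendsto (fun k => u (φ k)) atTop (𝓝 b.1) :=
      (continuous_fst.tendsto b).comp hconv
    have hv1 : Tendsto (fun k => v (φ k)) atTop (𝓝 b.2) :=
      (continuous_snd.tendsto b).comp hconv
    -- the limit pair is a tangent vector
    have hmemT : mk2 b.1 b.2 ∈ tcone (gph (sv f U)) z0 := by
      refine ⟨t ∘ φ, fun k => mk2 (u (φ k)) (v (φ k)), fun k => htpos _,
        ht0.comp hφ.tendsto_atTop, ?_, ?_⟩
      · have := ((mkL n).continuous.tendsto b).comp hconv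
        simpa [Function.comp_def, ← mkL_apply] using this
      · intro k
        have he : z0 + (t ∘ φ) k • mk2 (u (φ k)) (v (φ k))
            = mk2 (xk (φ k)) (f (xk (φ k))) := by
          rw [Function.comp_apply, smul_mk2, hz0, mk2_add]
          congr 1
          · rw [hudef]
            rw [smul_inv_smul₀ (ne_of_gt (htpos (φ k)))]
            abel
          · rw [hvdef]
            rw [smul_inv_smul₀ (ne_of_gt (htpos (φ k)))]
            abel
        rw [he, mem_gph_sv_iff, fst2_mk2, snd2_mk2]
        exact ⟨hxkU _, rfl⟩
    have hL : mk2 b.1 b.2 ∈ L := by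
      have : mk2 b.1 b.2 ∈ (L : Set (E2 n)) := by rw [htan]; exact hmemT
      exact this
    have hA : b.2 = A' b.1 := by
      have := hgraph _ hL
      rwa [fst2_mk2, snd2_mk2] at this
    -- contradiction
    have hkey : ∀ k, ε ≤ ‖v k - A' (u k)‖ := by
      intro k
      have heq : g (xk k) = ‖v k - A' (u k)‖ := by
        have hrw : (t k)⁻¹ • (f (xk k) - f x - A' (xk k - x)) = v k - A' (u k) := by
          rw [smul_sub, hvdef, hudef, map_smul]
        calc g (xk k) = ‖(t k)⁻¹ • (f (xk k) - f x - A' (xk k - x))‖ := by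
              rw [hg]
              simp only [norm_smul, Real.norm_eq_abs, abs_inv, abs_of_pos (htpos k)]
              rfl
          _ = ‖v k - A' (u k)‖ := by rw [hrw]
      rw [← heq]; exact hgε k
    have hlim : Tendsto (fun k => ‖v (φ k) - A' (u (φ k))‖) atTop (𝓝 ‖b.2 - A' b.1‖) :=
      (hv1.sub ((A'.continuous.tendsto _).comp hu1)).norm
    have : ε ≤ ‖b.2 - A' b.1‖ :=
      ge_of_tendsto hlim (Filter.Eventually.of_forall fun k => hkey (φ k))
    rw [← hA, sub_self, norm_zero] at this
    linarith
  exact hder.differentiableAt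

end SCD
end
end

section
/- Let F : ℝ^n ⇒ ℝ^n and let (x, y) ∈ gph F. Then L ∈ Sp F(x, y) if and only if there exist sequences (u_k, v_k) ∈ gph F with (u_k, v_k) → (x, y) and L_k ∈ Sp F(u_k, v_k) with d_Z(L_k, L) → 0; the analogous equivalence holds with Sp replaced by Sp*. In other words, Sp F(x, y) and Sp* F(x, y) equal their own sequential outer limits over graph points converging to (x, y). -/
open Filter Topology Metric Set
open scoped InnerProductSpace RealInnerProductSpace ENNReal NNReal

noncomputable section

namespace SCD

variable {n : ℕ}

/-! ### Auxiliary lemmas for Statement 7 -/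

lemma dZ_self (L : Submodule ℝ (E2 n)) : dZ L L = 0 := by
  show ‖projC L - projC L‖ = 0
  rw [sub_self, norm_zero]

lemma dZ_nonneg (L₁ L₂ : Submodule ℝ (E2 n)) : 0 ≤ dZ L₁ L₂ := norm_nonneg _

lemma dZ_triangle (L₁ L₂ L₃ : Submodule ℝ (E2 n)) : dZ L₁ L₃ ≤ dZ L₁ L₂ + dZ L₂ L₃ := by
  show ‖projC L₁ - projC L₃‖ ≤ ‖projC L₁ - projC L₂‖ + ‖projC L₂ - projC L₃‖
  exact norm_sub_le_norm_sub_add_norm_sub _ _ _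

/-- A tangent-subspace point belongs to its own `Sp`. -/
lemma mem_Sp_self {F : E n → Set (E n)} {z : E2 n} {L : Submodule ℝ (E2 n)}
    (hz : z ∈ gph F) (hr : Module.finrank ℝ L = n) (ht : (L : Set (E2 n)) = tcone (gph F) z) :
    L ∈ Sp F z :=
  ⟨hr, fun _ => z, fun _ => L, fun _ => ⟨hz, hr, ht⟩, tendsto_const_nhds, by
    simpa [dZ_self] using (tendsto_const_nhds : Tendsto (fun _ : ℕ => (0:ℝ)) atTop (𝓝 0))⟩

lemma tendsto_one_div_succ : Tendsto (fun k : ℕ => 1 / ((k : ℝ) + 1)) atTop (𝓝 0) :=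
  tendsto_one_div_add_atTop_nhds_zero_nat

/-- The `Sp` half of Statement 7, for an arbitrary base point. -/
lemma Sp_iff_outer (F : E n → Set (E n)) (z : E2 n) (L : Submodule ℝ (E2 n)) :
    L ∈ Sp F z ↔
      (Module.finrank ℝ L = n ∧ ∃ (zk : ℕ → E2 n) (Lk : ℕ → Submodule ℝ (E2 n)),
        (∀ k, zk k ∈ gph F ∧ Lk k ∈ Sp F (zk k)) ∧ Tendsto zk atTop (𝓝 z) ∧
        Tendsto (fun k => dZ (Lk k) L) atTop (𝓝 0)) := by
  constructor
  · rintro ⟨hr, zk, Lk, h, hz, hd⟩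
    exact ⟨hr, zk, Lk, fun k => ⟨(h k).1, mem_Sp_self (h k).1 (h k).2.1 (h k).2.2⟩, hz, hd⟩
  · rintro ⟨hr, zk, Lk, h, hz, hd⟩
    have key : ∀ k : ℕ, ∃ (w : E2 n) (M : Submodule ℝ (E2 n)),
        w ∈ gph F ∧ Module.finrank ℝ M = n ∧ (M : Set (E2 n)) = tcone (gph F) w ∧
        dist w (zk k) < 1 / ((k : ℝ) + 1) ∧ dZ M (Lk k) < 1 / ((k : ℝ) + 1) := by
      intro k
      obtain ⟨_, wj, Mj, hj, hwz, hdz⟩ := (h k).2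
      have hε : (0:ℝ) < 1 / ((k : ℝ) + 1) := by positivity
      have h1 : ∀ᶠ j in atTop, dist (wj j) (zk k) < 1 / ((k : ℝ) + 1) :=
        (Metric.tendsto_nhds.mp hwz _ hε)
      have h2 : ∀ᶠ j in atTop, dZ (Mj j) (Lk k) < 1 / ((k : ℝ) + 1) := by
        have := Metric.tendsto_nhds.mp hdz _ hε
        filter_upwards [this] with j hj'
        have := hj'
        rw [Real.dist_eq, sub_zero] at this
        exact lt_of_le_of_lt (le_abs_self _) this
      obtain ⟨j, hj1, hj2⟩ := (h1.and h2).exists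
      exact ⟨wj j, Mj j, (hj j).1, (hj j).2.1, (hj j).2.2, hj1, hj2⟩
    choose w M hw hrM htM hdist hdZM using key
    refine ⟨hr, w, M, fun k => ⟨hw k, hrM k, htM k⟩, ?_, ?_⟩
    · rw [tendsto_iff_dist_tendsto_zero]
      have hbd : ∀ k : ℕ, dist (w k) z ≤ 1 / ((k : ℝ) + 1) + dist (zk k) z := fun k =>
        le_trans (dist_triangle (w k) (zk k) z) (by linarith [hdist k, (le_refl (dist (zk k) z))])
      have hlim : Tendsto (fun k : ℕ => 1 / ((k : ℝ) + 1) + dist (zk k) z) atTop (𝓝 0) := by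
        have := tendsto_one_div_succ.add (tendsto_iff_dist_tendsto_zero.mp hz)
        simpa using this
      exact squeeze_zero (fun k => dist_nonneg) hbd hlim
    · have hbd : ∀ k : ℕ, dZ (M k) L ≤ 1 / ((k : ℝ) + 1) + dZ (Lk k) L := fun k =>
        le_trans (dZ_triangle (M k) (Lk k) L) (by linarith [(hdZM k).le])
      have hlim : Tendsto (fun k : ℕ => 1 / ((k : ℝ) + 1) + dZ (Lk k) L) atTop (𝓝 0) := by
        have := tendsto_one_div_succ.add hd
        simpa using this
      exact squeeze_zero (fun k => dZ_nonneg _ _) hbd hlim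

/-- `Sneg` as a linear isometry equivalence. -/
def negIso (n : ℕ) : E2 n ≃ₗᵢ[ℝ] E2 n :=
  (Sneg n).isometryOfInner (fun x y => by
    show ⟪(Sneg n x).fst, (Sneg n y).fst⟫_ℝ + ⟪(Sneg n x).snd, (Sneg n y).snd⟫_ℝ = _
    show ⟪-(x.snd), -(y.snd)⟫_ℝ + ⟪x.fst, y.fst⟫_ℝ = _
    rw [inner_neg_neg, WithLp.prod_inner_apply]; exact add_comm _ _)

lemma negIso_toLinearEquiv : (negIso n).toLinearEquiv = Sneg n := rfl

lemma negIso_apply (x : E2 n) : negIso n x = Sneg n x := rfl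

lemma Sneg_Sneg (x : E2 n) : Sneg n (Sneg n x) = -x := by
  simp [Sneg, lp2]; rfl

lemma map_Sneg_orthogonal (p : Submodule ℝ (E2 n)) :
    (p.map (Sneg n).toLinearMap)ᗮ = pᗮ.map (Sneg n).toLinearMap := by
  ext x
  rw [Submodule.mem_orthogonal]
  constructor
  · intro hx
    refine Submodule.mem_map.mpr ⟨(Sneg n).symm x, ?_, by simp⟩
    rw [Submodule.mem_orthogonal]
    intro u hu
    have h1 : ⟪Sneg n u, x⟫_ℝ = 0 := hx _ (Submodule.mem_map_of_mem hu)
    have h2 : ⟪negIso n u, negIso n ((Sneg n).symm x)⟫_ℝ = ⟪u, (Sneg n).symm x⟫_ℝ :=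
      (negIso n).inner_map_map _ _
    rw [← h2]
    have h3 : negIso n ((Sneg n).symm x) = x := (Sneg n).apply_symm_apply x
    rw [h3]
    exact h1
  · intro hx u hu
    obtain ⟨y, hy, rfl⟩ := Submodule.mem_map.mp hx
    obtain ⟨v, hv, rfl⟩ := Submodule.mem_map.mp hu
    have h2 : ⟪negIso n v, negIso n y⟫_ℝ = ⟪v, y⟫_ℝ := (negIso n).inner_map_map _ _
    have : ((Sneg n).toLinearMap v : E2 n) = negIso n v := rfl
    rw [this, show ((Sneg n).toLinearMap y : E2 n) = negIso n y from rfl, h2]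
    exact (Submodule.mem_orthogonal p y).mp hy v hv

lemma map_neg_self (p : Submodule ℝ (E2 n)) :
    p.map ((Sneg n).toLinearMap ∘ₗ (Sneg n).toLinearMap) = p := by
  ext x
  simp only [Submodule.mem_map, LinearMap.coe_comp, Function.comp_apply,
    LinearEquiv.coe_coe]
  constructor
  · rintro ⟨y, hy, rfl⟩
    rw [Sneg_Sneg]; exact p.neg_mem hy
  · intro hx
    exact ⟨-x, p.neg_mem hx, by rw [Sneg_Sneg, neg_neg]⟩

lemma adjS_adjS (L : Submodule ℝ (E2 n)) : adjS (adjS L) = L := by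
  unfold adjS
  rw [map_Sneg_orthogonal, Submodule.orthogonal_orthogonal, ← Submodule.map_comp]
  exact map_neg_self L

lemma finrank_E2 : Module.finrank ℝ (E2 n) = n + n := by
  rw [(lp2 n).finrank_eq]; simp

lemma finrank_adjS {L : Submodule ℝ (E2 n)} (h : Module.finrank ℝ L = n) :
    Module.finrank ℝ (adjS L) = n := by
  unfold adjS
  rw [LinearEquiv.finrank_map_eq]
  have := Submodule.finrank_add_finrank_orthogonal (𝕜 := ℝ) L
  rw [h, finrank_E2] at this
  omega

lemma projC_apply (L : Submodule ℝ (E2 n)) (x : E2 n) :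
    projC L x = L.starProjection x := rfl

lemma projC_adjS_apply (L : Submodule ℝ (E2 n)) (x : E2 n) :
    projC (adjS L) x = negIso n ((negIso n).symm x - projC L ((negIso n).symm x)) := by
  have hmap : adjS L = Lᗮ.map ((negIso n).toLinearEquiv : E2 n →ₗ[ℝ] E2 n) := rfl
  rw [projC_apply, hmap, Submodule.starProjection_map_apply]
  congr 1
  rw [Submodule.starProjection_orthogonal_val]
  rfl

lemma dZ_adjS (L₁ L₂ : Submodule ℝ (E2 n)) : dZ (adjS L₁) (adjS L₂) = dZ L₁ L₂ := by
  unfold dZ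
  have hcomp : projC (adjS L₁) - projC (adjS L₂) =
      ((negIso n).toLinearIsometry.toContinuousLinearMap.comp
        ((projC L₂ - projC L₁).comp
          (negIso n).symm.toLinearIsometry.toContinuousLinearMap)) := by
    ext x
    simp only [ContinuousLinearMap.sub_apply, ContinuousLinearMap.coe_comp',
      Function.comp_apply, LinearIsometry.coe_toContinuousLinearMap,
      LinearIsometryEquiv.coe_toLinearIsometry]
    rw [projC_adjS_apply, projC_adjS_apply, ← map_sub]
    congr 1
    abel
  rw [hcomp, LinearIsometry.norm_toContinuousLinearMap_comp]
  exact (ContinuousLinearMap.opNorm_comp_linearIsometryEquiv _ (negIso n).symm).trans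
    (norm_sub_rev _ _)

/- STATEMENT 7 -/
theorem stmt7 (n : ℕ) (F : E n → Set (E n)) (z : E2 n) (hz : z ∈ gph F) :
    (∀ L : Submodule ℝ (E2 n), L ∈ Sp F z ↔
      (Module.finrank ℝ L = n ∧ ∃ (zk : ℕ → E2 n) (Lk : ℕ → Submodule ℝ (E2 n)),
        (∀ k, zk k ∈ gph F ∧ Lk k ∈ Sp F (zk k)) ∧ Tendsto zk atTop (𝓝 z) ∧
        Tendsto (fun k => dZ (Lk k) L) atTop (𝓝 0))) ∧
    (∀ L : Submodule ℝ (E2 n), L ∈ SpStar F z ↔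
      (Module.finrank ℝ L = n ∧ ∃ (zk : ℕ → E2 n) (Lk : ℕ → Submodule ℝ (E2 n)),
        (∀ k, zk k ∈ gph F ∧ Lk k ∈ SpStar F (zk k)) ∧ Tendsto zk atTop (𝓝 z) ∧
        Tendsto (fun k => dZ (Lk k) L) atTop (𝓝 0))) := by
  refine ⟨Sp_iff_outer F z, fun L => ?_⟩
  constructor
  · rintro ⟨M, hM, rfl⟩
    obtain ⟨hr, zk, Lk, h, hzk, hd⟩ := hM
    refine ⟨finrank_adjS hr, zk, fun k => adjS (Lk k), fun k =>
      ⟨(h k).1, Lk k, mem_Sp_self (h k).1 (h k).2.1 (h k).2.2, rfl⟩, hzk, ?_⟩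
    simpa only [dZ_adjS] using hd
  · rintro ⟨hr, zk, Lk, h, hzk, hd⟩
    have hM : ∀ k, ∃ M, M ∈ Sp F (zk k) ∧ Lk k = adjS M := fun k => (h k).2
    choose M hMk hLk using hM
    have : adjS L ∈ Sp F z := by
      rw [Sp_iff_outer]
      refine ⟨finrank_adjS hr, zk, M, fun k => ⟨(h k).1, hMk k⟩, hzk, ?_⟩
      have : ∀ k, dZ (M k) (adjS L) = dZ (Lk k) L := fun k => by
        rw [← dZ_adjS, ← hLk, adjS_adjS]
      simpa only [this] using hd
    exact ⟨adjS L, this, (adjS_adjS L).symm⟩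

end SCD
end
end
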